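/- arXiv:1703.03964 — 2 statements merged into one kernel-verified Lean document; each statement's English description precedes it below -/
import Mathlib

section
/- The image of P₃ under H_Δ is H_Δ(P₃) = {(a,b) ∈ P : 1 ≤ b ≤ 2a^{−5/4}}, and P₃ ⊆ H_Δ(P₃). -/
/-- The parameter region P. -/
def Pset : Set (ℝ × ℝ) :=
  {p | 1 < p.1 ∧ p.1 ≤ 2 ∧ 1 ≤ p.2 ∧ p.2 ≤ 2 ∧ p.1 * p.2 ≤ 2}

/-- The parameter region P₃. -/
def P3 : Set (ℝ × ℝ) :=
  {p | p ∈ Pset ∧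
    (2 + p.1 ^ 2 + p.1 ^ 3) / (1 + p.1 + p.1 ^ 3) ≤ p.2 ∧
    p.2 ≤ 2 * (1 + p.1 + p.1 ^ 3) / (p.1 * (2 + p.1 ^ 2 + p.1 ^ 3))}

/-- The renormalization operator H_Δ. -/
noncomputable def HDelta (p : ℝ × ℝ) : ℝ × ℝ :=
  (p.1 ^ 4, (p.1 * p.2 + p.2 - 2) / (p.1 ^ 2 * (1 + p.1 - p.1 * p.2)))

lemma rpow_aux {a : ℝ} (ha : 0 < a) : ((a^4 : ℝ)) ^ (-(5:ℝ)/4) = (a^5)⁻¹ := by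
  rw [← Real.rpow_natCast a 4, ← Real.rpow_mul ha.le, ← Real.rpow_natCast a 5,
    ← Real.rpow_neg ha.le]
  norm_num

lemma rpow_aux2 {a : ℝ} (ha : 1 ≤ a) : (a^2)⁻¹ ≤ a ^ (-(5:ℝ)/4) := by
  have h1 : (a:ℝ) ^ (-(2:ℝ)) = (a^2)⁻¹ := by
    rw [← Real.rpow_natCast a 2, ← Real.rpow_neg (by linarith)]
    norm_num
  rw [← h1]
  exact Real.rpow_le_rpow_of_exponent_le ha (by norm_num)

lemma P3_facts {a b : ℝ} (h : (a,b) ∈ P3) :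
    1 < a ∧ a^5 ≤ 2 ∧ 0 < 1 + a - a*b ∧
    1 ≤ (a*b + b - 2)/(a^2*(1+a-a*b)) ∧
    (a*b + b - 2)/(a^2*(1+a-a*b)) ≤ 2 * (a^5)⁻¹ ∧
    a^2 * b ≤ 2 := by
  obtain ⟨⟨ha1, ha2, hb1, hb2, hab⟩, hlo, hhi⟩ := h
  simp only at ha1 ha2 hb1 hb2 hab hlo hhi
  have hapos : (0:ℝ) < a := by linarith
  have hd1 : (0:ℝ) < 1 + a + a^3 := by positivity
  have hd2 : (0:ℝ) < a * (2 + a^2 + a^3) := by positivity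
  have hlo' : 2 + a^2 + a^3 ≤ b * (1 + a + a^3) := (div_le_iff₀ hd1).mp hlo
  have hhi' : b * (a * (2 + a^2 + a^3)) ≤ 2 * (1 + a + a^3) := (le_div_iff₀ hd2).mp hhi
  have hD : 0 < 1 + a - a*b := by linarith
  have hden : 0 < a^2 * (1 + a - a*b) := by positivity
  have ha5 : (0:ℝ) < a^5 := by positivity
  have hg1 : 1 ≤ (a*b + b - 2)/(a^2*(1+a-a*b)) := by
    rw [le_div_iff₀ hden]; nlinarith [hlo']
  have hg2 : (a*b + b - 2)/(a^2*(1+a-a*b)) ≤ 2 * (a^5)⁻¹ := by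
    rw [← div_eq_mul_inv, div_le_div_iff₀ hden ha5]
    nlinarith [mul_le_mul_of_nonneg_left hhi' (sq_nonneg a)]
  have ha52 : a^5 ≤ 2 := by
    have := hg1.trans hg2
    rw [← div_eq_mul_inv, le_div_iff₀ ha5] at this
    linarith
  have hab2 : a^2 * b ≤ 2 := by nlinarith [mul_le_mul_of_nonneg_left hhi' hapos.le]
  exact ⟨ha1, ha52, hD, hg1, hg2, hab2⟩

set_option maxHeartbeats 1000000 in
lemma image_eq : HDelta '' P3 = {p ∈ Pset | 1 ≤ p.2 ∧ p.2 ≤ 2 * p.1 ^ (-(5 : ℝ) / 4)} := by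
  ext ⟨x, y⟩
  constructor
  · rintro ⟨⟨a, b⟩, hmem, heq⟩
    rw [← heq]
    obtain ⟨ha1, ha52, hD, hg1, hg2, hab2⟩ := P3_facts hmem
    have hapos : (0:ℝ) < a := by linarith
    have ha5 : (0:ℝ) < a^5 := by positivity
    have hinv : a^5 * (a^5)⁻¹ = 1 := mul_inv_cancel₀ (ne_of_gt ha5)
    have hinvpos : (0:ℝ) < (a^5)⁻¹ := by positivity
    have h15 : (1:ℝ) ≤ a^5 := by nlinarith [pow_le_pow_left₀ (by norm_num : (0:ℝ) ≤ 1) ha1.le 5]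
    set g := (a*b + b - 2)/(a^2*(1+a-a*b)) with hgdef
    have hg2' : g ≤ 2 := by
      nlinarith [mul_le_mul_of_nonneg_left hinvpos.le (by nlinarith : (0:ℝ) ≤ a^5 - 1)]
    have h45 : a^4 ≤ a^5 := by nlinarith
    simp only [HDelta, Pset, Set.mem_setOf_eq, ← hgdef]
    have h14 : (1:ℝ) < a^4 := one_lt_pow₀ ha1 (by norm_num)
    refine ⟨⟨h14, by nlinarith, hg1, hg2', ?_⟩, hg1, ?_⟩
    · nlinarith [mul_le_mul_of_nonneg_left hg2 (by positivity : (0:ℝ) ≤ a^4)]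
    · rw [show (-(5:ℝ)/4) = (-(5:ℝ))/4 by norm_num] at *
      rw [rpow_aux hapos]
      exact hg2
  · rintro ⟨⟨hx1, hx2, hy1, hy2, hxy⟩, hy1', hyr⟩
    simp only at hx1 hx2 hy1 hy2 hxy hy1' hyr
    have hxpos : (0:ℝ) < x := by linarith
    set a := x ^ ((1:ℝ)/4) with hadef
    have ha1 : 1 < a := by
      rw [hadef]
      exact Real.one_lt_rpow_iff_of_pos hxpos |>.mpr (Or.inl ⟨hx1, by norm_num⟩)
    have hapos : (0:ℝ) < a := by linarith
    have ha4 : a^4 = x := by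
      rw [hadef, ← Real.rpow_natCast (x ^ ((1:ℝ)/4)) 4, ← Real.rpow_mul hxpos.le]
      norm_num
    have hy5 : y * a^5 ≤ 2 := by
      have h5 : x ^ (-(5:ℝ)/4) = (a^5)⁻¹ := by rw [← ha4, rpow_aux hapos]
      rw [h5] at hyr
      have ha5 : (0:ℝ) < a^5 := by positivity
      calc y * a^5 ≤ 2 * (a^5)⁻¹ * a^5 := by nlinarith
        _ = 2 := by field_simp
    have ha52 : a^5 ≤ 2 := by nlinarith
    have hd : (0:ℝ) < 1 + a + a^3 * y := by positivity
    have hd1 : (0:ℝ) < 1 + a + a^3 := by positivity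
    have hd2 : (0:ℝ) < a * (2 + a^2 + a^3) := by positivity
    set b := (2 + a^2*(1+a)*y) / (1 + a + a^3*y) with hbdef
    have hb1 : 1 ≤ b := by rw [hbdef, le_div_iff₀ hd]; nlinarith
    have hb2 : b ≤ 2 := by rw [hbdef, div_le_iff₀ hd]; nlinarith
    have hab : a * b ≤ 2 := by
      rw [hbdef, mul_div_assoc', div_le_iff₀ hd]; nlinarith
    have hlo : (2 + a^2 + a^3) / (1 + a + a^3) ≤ b := by
      rw [hbdef, div_le_div_iff₀ hd1 hd]
      nlinarith [mul_nonneg (sub_nonneg.2 hy1') (by positivity : (0:ℝ) ≤ a^2*(1+a^2))]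
    have hhi : b ≤ 2 * (1 + a + a^3) / (a * (2 + a^2 + a^3)) := by
      rw [hbdef, div_le_div_iff₀ hd hd2]
      nlinarith [mul_nonneg (by linarith : (0:ℝ) ≤ 2 - y * a^5) (by positivity : (0:ℝ) ≤ 1 + a^2)]
    refine ⟨(a, b), ⟨⟨ha1, by nlinarith, hb1, hb2, hab⟩, hlo, hhi⟩, ?_⟩
    have hD : 0 < 1 + a - a*b := by linarith
    have hden : (a:ℝ)^2 * (1 + a - a*b) ≠ 0 := (mul_pos (pow_pos hapos 2) hD).ne'
    show (a^4, (a*b + b - 2) / (a^2 * (1 + a - a*b))) = (x, y)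
    refine Prod.ext ha4 ?_
    show (a*b + b - 2) / (a^2 * (1 + a - a*b)) = y
    rw [div_eq_iff hden, hbdef]
    field_simp
    ring

theorem HDelta_image_P3 :
    HDelta '' P3 = {p ∈ Pset | 1 ≤ p.2 ∧ p.2 ≤ 2 * p.1 ^ (-(5 : ℝ) / 4)} ∧
    P3 ⊆ HDelta '' P3 := by
  refine ⟨image_eq, ?_⟩
  rw [image_eq]
  rintro ⟨a, b⟩ h
  obtain ⟨ha1, ha52, hD, hg1, hg2, hab2⟩ := P3_facts h
  obtain ⟨hP, hlo, hhi⟩ := h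
  refine ⟨hP, hP.2.2.1, ?_⟩
  show b ≤ 2 * a ^ (-(5:ℝ)/4)
  have h2 : (a^2)⁻¹ ≤ a ^ (-(5:ℝ)/4) := rpow_aux2 ha1.le
  have h3 : b ≤ 2 * (a^2)⁻¹ := by
    rw [← div_eq_mul_inv, le_div_iff₀ (by positivity)]
    linarith [hab2]
  linarith
end

section
/- The image of P₃ under H_Π satisfies H_Π(P₃) = {(a,b) ∈ P : ab ≤ 2 and b ≥ a^{1/4}}, and P₃ ⊆ H_Π(P₃). -/
/-- The renormalization operator H_Π. -/
noncomputable def HPi (p : ℝ × ℝ) : ℝ × ℝ :=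
  (p.1 ^ 4, (p.1 * p.2 + p.2 - 2) / (p.1 * (1 + p.1 - p.1 * p.2)))

lemma a5_le {a b : ℝ} (ha : 1 < a)
    (hL : 2 + a ^ 2 + a ^ 3 ≤ b * (1 + a + a ^ 3))
    (hU : b * (a * (2 + a ^ 2 + a ^ 3)) ≤ 2 * (1 + a + a ^ 3)) : a ^ 5 ≤ 2 := by
  have h1 : 0 < a * (2 + a ^ 2 + a ^ 3) := by nlinarith
  have h2 : 0 < 1 + a + a ^ 3 := by nlinarith
  have e1 := mul_le_mul_of_nonneg_left hL h1.le
  have e2 := mul_le_mul_of_nonneg_left hU h2.le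
  have key : a * (2 + a ^ 2 + a ^ 3) ^ 2 ≤ 2 * (1 + a + a ^ 3) ^ 2 := by nlinarith
  -- 2(1+a+a^3)^2 - a(2+a^2+a^3)^2 = (2-a^5)(1+a^2)
  nlinarith [key, sq_nonneg a]

lemma rpow_quarter {a : ℝ} (ha : 0 ≤ a) : (a ^ 4) ^ ((1 : ℝ) / 4) = a := by
  rw [← Real.rpow_natCast a 4, ← Real.rpow_mul ha]
  norm_num

set_option maxHeartbeats 1000000 in
lemma forward_dir (A B : ℝ)
    (h : ∃ a b : ℝ, ((a, b) ∈ P3) ∧ a ^ 4 = A ∧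
      (a * b + b - 2) / (a * (1 + a - a * b)) = B) :
    (1 < A ∧ A ≤ 2 ∧ 1 ≤ B ∧ B ≤ 2 ∧ A * B ≤ 2) ∧ A * B ≤ 2 ∧ A ^ ((1 : ℝ) / 4) ≤ B := by
  obtain ⟨a, b, hmem, hA, hB⟩ := h
  simp only [P3, Pset, Set.mem_setOf_eq] at hmem
  obtain ⟨⟨ha1, ha2, hb1, hb2, hab⟩, hL, hU⟩ := hmem
  have ha0 : (0 : ℝ) < a := by linarith
  have hden1 : (0 : ℝ) < 1 + a + a ^ 3 := by nlinarith
  have hden2 : (0 : ℝ) < a * (2 + a ^ 2 + a ^ 3) := by nlinarith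
  have hL' : 2 + a ^ 2 + a ^ 3 ≤ b * (1 + a + a ^ 3) := (div_le_iff₀ hden1).mp hL
  have hU' : b * (a * (2 + a ^ 2 + a ^ 3)) ≤ 2 * (1 + a + a ^ 3) := (le_div_iff₀ hden2).mp hU
  have ha5 : a ^ 5 ≤ 2 := a5_le ha1 hL' hU'
  have ha4 : a ^ 4 ≤ 2 := by nlinarith
  have hD : (0 : ℝ) < a * (1 + a - a * b) := by nlinarith
  have hBlow : a ≤ (a * b + b - 2) / (a * (1 + a - a * b)) := by
    rw [le_div_iff₀ hD]; nlinarith [hL']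
  have hBhigh : a ^ 4 * ((a * b + b - 2) / (a * (1 + a - a * b))) ≤ 2 := by
    rw [mul_div_assoc', div_le_iff₀ hD]
    nlinarith [mul_le_mul_of_nonneg_left hU' ha0.le]
  subst hA hB
  refine ⟨⟨by nlinarith, ha4, by linarith, ?_, hBhigh⟩, hBhigh, ?_⟩
  · have hB0 : (0:ℝ) ≤ (a * b + b - 2) / (a * (1 + a - a * b)) := le_trans ha0.le hBlow
    have h14 : (1:ℝ) ≤ a ^ 4 := by nlinarith
    have := mul_le_mul_of_nonneg_right h14 hB0
    nlinarith [hBhigh, this]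
  · rw [rpow_quarter ha0.le]; exact hBlow

set_option maxHeartbeats 1000000 in
lemma backward_dir (A B : ℝ)
    (h : (1 < A ∧ A ≤ 2 ∧ 1 ≤ B ∧ B ≤ 2 ∧ A * B ≤ 2) ∧ A * B ≤ 2 ∧ A ^ ((1 : ℝ) / 4) ≤ B) :
    ∃ a b : ℝ, ((a, b) ∈ P3) ∧ a ^ 4 = A ∧
      (a * b + b - 2) / (a * (1 + a - a * b)) = B := by
  simp only [P3, Pset, Set.mem_setOf_eq]
  obtain ⟨⟨hA1, hA2, hB1, hB2, hABle⟩, hab2, hpow⟩ := h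
  obtain ⟨a, hadef⟩ : ∃ a : ℝ, a = A ^ ((1 : ℝ) / 4) := ⟨_, rfl⟩
  have hA0 : (0 : ℝ) < A := by linarith
  have ha1 : 1 < a := by
    rw [hadef]
    exact (Real.one_lt_rpow_iff_of_pos hA0).mpr (Or.inl ⟨hA1, by norm_num⟩)
  have ha0 : (0 : ℝ) < a := by linarith
  have ha4 : a ^ 4 = A := by
    rw [hadef, ← Real.rpow_natCast (A ^ ((1 : ℝ) / 4)) 4, ← Real.rpow_mul hA0.le]
    norm_num
  have hBa : a ≤ B := hadef ▸ hpow
  have hd : (0 : ℝ) < a + 1 + B * a ^ 2 := by nlinarith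
  obtain ⟨b, hbdef⟩ : ∃ b : ℝ, b = (B * a * (1 + a) + 2) / (a + 1 + B * a ^ 2) := ⟨_, rfl⟩
  have hb : b * (a + 1 + B * a ^ 2) = B * a * (1 + a) + 2 := by
    rw [hbdef, div_mul_cancel₀ _ hd.ne']
  have hBa4 : B * a ^ 4 ≤ 2 := by rw [ha4]; linarith [hABle]
  have ha2 : a ≤ 2 := by nlinarith [ha4, hA2]
  have hb1 : 1 ≤ b := by
    nlinarith [hb, hd, mul_le_mul_of_nonneg_right hB1 ha0.le]
  have hb2 : b ≤ 2 := by
    nlinarith [hb, hd, mul_le_mul_of_nonneg_right hB2 ha0.le]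
  have hB0 : (0 : ℝ) ≤ B := by linarith
  have h1 : B * a ^ 3 ≤ 2 + B * a ^ 2 := by
    nlinarith [hBa4, mul_nonneg (mul_nonneg hB0 (pow_nonneg ha0.le 3)) (by linarith : (0:ℝ) ≤ a - 1)]
  have hab : a * b ≤ 2 := by
    have e : a * b * (a + 1 + B * a ^ 2) = a * (B * a * (1 + a) + 2) := by
      rw [mul_assoc, hb]
    have h2 : a * b * (a + 1 + B * a ^ 2) ≤ 2 * (a + 1 + B * a ^ 2) := by
      rw [e]; nlinarith [h1]
    exact le_of_mul_le_mul_right h2 hd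
  have hden1 : (0 : ℝ) < 1 + a + a ^ 3 := by positivity
  have hden2 : (0 : ℝ) < a * (2 + a ^ 2 + a ^ 3) := by positivity
  have hL : (2 + a ^ 2 + a ^ 3) / (1 + a + a ^ 3) ≤ b := by
    rw [div_le_iff₀ hden1]
    have e : b * (1 + a + a ^ 3) * (a + 1 + B * a ^ 2)
        = (B * a * (1 + a) + 2) * (1 + a + a ^ 3) := by
      rw [mul_right_comm, hb]
    have hpoly : (2 + a ^ 2 + a ^ 3) * (a + 1 + B * a ^ 2)
        ≤ (B * a * (1 + a) + 2) * (1 + a + a ^ 3) := by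
      nlinarith [mul_nonneg (mul_nonneg (sub_nonneg.mpr hBa) ha0.le)
        (by positivity : (0 : ℝ) ≤ 1 + a ^ 2)]
    have := hpoly.trans_eq e.symm
    exact le_of_mul_le_mul_right this hd
  have hU : b ≤ 2 * (1 + a + a ^ 3) / (a * (2 + a ^ 2 + a ^ 3)) := by
    rw [le_div_iff₀ hden2]
    have e : b * (a * (2 + a ^ 2 + a ^ 3)) * (a + 1 + B * a ^ 2)
        = (B * a * (1 + a) + 2) * (a * (2 + a ^ 2 + a ^ 3)) := by
      rw [mul_right_comm, hb]
    have hpoly : (B * a * (1 + a) + 2) * (a * (2 + a ^ 2 + a ^ 3))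
        ≤ 2 * (1 + a + a ^ 3) * (a + 1 + B * a ^ 2) := by
      nlinarith [mul_nonneg (sub_nonneg.mpr hBa4)
        (by positivity : (0 : ℝ) ≤ 1 + a ^ 2)]
    have := e.trans_le hpoly
    exact le_of_mul_le_mul_right this hd
  have hND : (0 : ℝ) < a * (1 + a - a * b) := by
    nlinarith [mul_le_mul_of_nonneg_left hab ha0.le]
  refine ⟨a, b, ⟨⟨⟨ha1, ha2, hb1, hb2, hab⟩, hL, hU⟩, ha4, ?_⟩⟩
  have hrel : a * b + b - 2 = B * (a * (1 + a - a * b)) := by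
    rw [hbdef]; field_simp; ring
  rw [hrel, mul_div_assoc, div_self hND.ne', mul_one]

set_option maxHeartbeats 1000000 in
theorem HPi_image_P3 :
    HPi '' P3 = {p ∈ Pset | p.1 * p.2 ≤ 2 ∧ p.1 ^ ((1 : ℝ) / 4) ≤ p.2} ∧
    P3 ⊆ HPi '' P3 := by
  have himage : HPi '' P3 = {p ∈ Pset | p.1 * p.2 ≤ 2 ∧ p.1 ^ ((1 : ℝ) / 4) ≤ p.2} := by
    ext ⟨A, B⟩
    simp only [Set.mem_image, Set.mem_sep_iff, Pset, HPi, Set.mem_setOf_eq, Prod.mk.injEq,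
      Prod.exists]
    constructor
    · intro h
      exact forward_dir A B h
    · intro h
      exact backward_dir A B h
  refine ⟨himage, ?_⟩
  rw [himage]
  rintro ⟨a, b⟩ ⟨⟨ha1, ha2, hb1, hb2, hab⟩, hL, hU⟩
  have ha0 : (0 : ℝ) < a := by linarith
  have hden1 : (0 : ℝ) < 1 + a + a ^ 3 := by nlinarith
  have hden2 : (0 : ℝ) < a * (2 + a ^ 2 + a ^ 3) := by nlinarith
  have hL' : 2 + a ^ 2 + a ^ 3 ≤ b * (1 + a + a ^ 3) := (div_le_iff₀ hden1).mp hL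
  have hU' : b * (a * (2 + a ^ 2 + a ^ 3)) ≤ 2 * (1 + a + a ^ 3) := (le_div_iff₀ hden2).mp hU
  have ha5 : a ^ 5 ≤ 2 := a5_le ha1 hL' hU'
  have hab' : a ≤ b := by
    -- b ≥ L ≥ a since 2 + a^3 ≥ a + a^4 when a^5 ≤ 2
    have hLa : a * (1 + a + a ^ 3) ≤ 2 + a ^ 2 + a ^ 3 := by nlinarith [ha5, ha1]
    nlinarith [hL', hden1]
  refine ⟨⟨ha1, ha2, hb1, hb2, hab⟩, hab, ?_⟩
  calc a ^ ((1 : ℝ) / 4) ≤ a ^ (1 : ℝ) := by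
        apply Real.rpow_le_rpow_of_exponent_le (le_of_lt ha1); norm_num
    _ = a := Real.rpow_one a
    _ ≤ b := hab'
end
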